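/- Let B̂ be a symmetric positive definite real N×N matrix, Â a symmetric real N×N matrix, and y ∈ ℝ^N nonzero. Let Y₂ ∈ ℝ^{N×(N−1)} satisfy Y₂ᵀ B̂ y = 0, Y₂ᵀ Â y = 0, Y₂ᵀ B̂ Y₂ = I_{N−1}, and Y₂ᵀ Â Y₂ = Σ₂, where Σ₂ is a diagonal matrix with diagonal entries μ₁, …, μ_{N−1}. Let Ê, F̂ be real N×N matrices, σ̂ ∈ ℝ, h ∈ ℝ^{N−1}, and set ŷ = y + Y₂ h; assume ŷ ≠ 0, (Â + Ê) ŷ = σ̂ (B̂ + F̂) ŷ, and m₀ := minᵢ |μᵢ − σ̂| > 0. Then sin∠(ŷ, y) ≤ ( ‖B̂⁻¹‖ / m₀ ) · ‖σ̂ F̂ − Ê‖. -/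

import Mathlib

open Matrix

/-- The spectral (ℓ²-operator) norm of a real matrix. -/
noncomputable def specNorm {ι κ : Type*} [Fintype ι] [Fintype κ] [DecidableEq κ]
    (A : Matrix ι κ ℝ) : ℝ :=
  ‖LinearMap.toContinuousLinearMap (Matrix.toEuclideanLin A)‖

/-- `sinAngle w w'` is the sine of the angle between `w` and the line spanned
by `w'`, i.e. `min_{μ ∈ ℝ} ‖w − μ w'‖ / ‖w‖`. -/
noncomputable def sinAngle {ι : Type*} [Fintype ι] (w w' : EuclideanSpace ℝ ι) : ℝ :=
  ⨅ μ : ℝ, ‖w - μ • w'‖ / ‖w‖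

section Aux
open scoped RealInnerProductSpace
open scoped MatrixOrder

private lemma L_comp {m n p : Type*} [Fintype m] [Fintype n] [Fintype p]
    [DecidableEq n] [DecidableEq p]
    (M : Matrix m n ℝ) (M' : Matrix n p ℝ) (x : EuclideanSpace ℝ p) :
    Matrix.toEuclideanLin M (Matrix.toEuclideanLin M' x) = Matrix.toEuclideanLin (M * M') x := by
  simp [Matrix.toEuclideanLin_apply, Matrix.mulVec_mulVec]

private lemma L_one {n : Type*} [Fintype n] [DecidableEq n] (x : EuclideanSpace ℝ n) :
    Matrix.toEuclideanLin (1 : Matrix n n ℝ) x = x := by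
  simp [Matrix.toEuclideanLin_apply]

private lemma L_norm_le {m n : Type*} [Fintype m] [Fintype n] [DecidableEq n]
    (M : Matrix m n ℝ) (x : EuclideanSpace ℝ n) :
    ‖Matrix.toEuclideanLin M x‖ ≤ specNorm M * ‖x‖ := by
  have := (LinearMap.toContinuousLinearMap (Matrix.toEuclideanLin M)).le_opNorm x
  simpa [specNorm] using this

private lemma inner_L_transpose {m n : Type*} [Fintype m] [Fintype n]
    [DecidableEq m] [DecidableEq n]
    (M : Matrix m n ℝ) (u : EuclideanSpace ℝ m) (v : EuclideanSpace ℝ n) :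
    ⟪Matrix.toEuclideanLin Mᵀ u, v⟫ = ⟪u, Matrix.toEuclideanLin M v⟫ := by
  have hMT : Mᵀ = Mᴴ := by ext i j; simp [Matrix.conjTranspose_apply]
  rw [hMT, Matrix.toEuclideanLin_conjTranspose_eq_adjoint, LinearMap.adjoint_inner_left]

private lemma key {n : Type*} [Fintype n] [DecidableEq n] (B : Matrix n n ℝ) (hB : B.PosDef)
    (v : EuclideanSpace ℝ n) :
    ‖v‖ ^ 2 ≤ specNorm B⁻¹ * ⟪v, Matrix.toEuclideanLin B v⟫ := by
  set S := CFC.sqrt B with hSdef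
  have hSS : S * S = B := CFC.sqrt_mul_sqrt_self B hB.posSemidef.nonneg
  have hSsym : Sᵀ = S := by
    have h := (CFC.sqrt_nonneg B).posSemidef.1
    ext i j
    have := congrFun (congrFun h i) j
    simpa [Matrix.conjTranspose_apply] using this
  have hdet : IsUnit S.det := by
    have hBdet : (0:ℝ) < B.det := hB.det_pos
    rw [← hSS, Matrix.det_mul] at hBdet
    have : S.det ≠ 0 := by intro h0; rw [h0] at hBdet; simp at hBdet
    exact isUnit_iff_ne_zero.2 this
  have hinv : S⁻¹ * S = 1 := Matrix.nonsing_inv_mul S hdet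
  have hStinv : (S⁻¹)ᵀ = S⁻¹ := by rw [Matrix.transpose_nonsing_inv, hSsym]
  have hBinv : S⁻¹ * S⁻¹ = B⁻¹ := by rw [← Matrix.mul_inv_rev, hSS]
  set u := Matrix.toEuclideanLin S v with hu
  have h1 : Matrix.toEuclideanLin S⁻¹ u = v := by
    rw [hu, L_comp, hinv, L_one]
  have h2 : ‖v‖ ^ 2 = ⟪u, Matrix.toEuclideanLin B⁻¹ u⟫ := by
    conv_lhs => rw [← h1]
    rw [← real_inner_self_eq_norm_sq]
    calc ⟪Matrix.toEuclideanLin S⁻¹ u, Matrix.toEuclideanLin S⁻¹ u⟫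
        = ⟪Matrix.toEuclideanLin (S⁻¹)ᵀ u, Matrix.toEuclideanLin S⁻¹ u⟫ := by rw [hStinv]
      _ = ⟪u, Matrix.toEuclideanLin S⁻¹ (Matrix.toEuclideanLin S⁻¹ u)⟫ := inner_L_transpose _ _ _
      _ = ⟪u, Matrix.toEuclideanLin B⁻¹ u⟫ := by rw [L_comp, hBinv]
  have h3 : ‖u‖ ^ 2 = ⟪v, Matrix.toEuclideanLin B v⟫ := by
    rw [← real_inner_self_eq_norm_sq, hu]
    calc ⟪Matrix.toEuclideanLin S v, Matrix.toEuclideanLin S v⟫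
        = ⟪Matrix.toEuclideanLin Sᵀ v, Matrix.toEuclideanLin S v⟫ := by rw [hSsym]
      _ = ⟪v, Matrix.toEuclideanLin S (Matrix.toEuclideanLin S v)⟫ := inner_L_transpose _ _ _
      _ = ⟪v, Matrix.toEuclideanLin B v⟫ := by rw [L_comp, hSS]
  calc ‖v‖ ^ 2 = ⟪u, Matrix.toEuclideanLin B⁻¹ u⟫ := h2
    _ ≤ ‖u‖ * ‖Matrix.toEuclideanLin B⁻¹ u‖ := real_inner_le_norm _ _
    _ ≤ ‖u‖ * (specNorm B⁻¹ * ‖u‖) :=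
        mul_le_mul_of_nonneg_left (L_norm_le _ _) (norm_nonneg _)
    _ = specNorm B⁻¹ * ‖u‖ ^ 2 := by ring
    _ = specNorm B⁻¹ * ⟪v, Matrix.toEuclideanLin B v⟫ := by rw [h3]

private lemma Y2_bound {N : ℕ} (B : Matrix (Fin N) (Fin N) ℝ) (hB : B.PosDef)
    (Y2 : Matrix (Fin N) (Fin (N-1)) ℝ) (hY2 : Y2ᵀ * B * Y2 = 1)
    (x : EuclideanSpace ℝ (Fin (N-1))) :
    ‖Matrix.toEuclideanLin Y2 x‖ ≤ Real.sqrt (specNorm B⁻¹) * ‖x‖ := by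
  have hK0 : (0:ℝ) ≤ specNorm B⁻¹ := norm_nonneg _
  have h := key B hB (Matrix.toEuclideanLin Y2 x)
  have h2 : ⟪Matrix.toEuclideanLin Y2 x,
      Matrix.toEuclideanLin B (Matrix.toEuclideanLin Y2 x)⟫ = ‖x‖^2 := by
    rw [real_inner_comm, L_comp, ← inner_L_transpose, L_comp, ← Matrix.mul_assoc, hY2, L_one,
      real_inner_self_eq_norm_sq]
  rw [h2] at h
  have hsq : ‖Matrix.toEuclideanLin Y2 x‖^2 ≤ (Real.sqrt (specNorm B⁻¹) * ‖x‖)^2 := by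
    rw [mul_pow, Real.sq_sqrt hK0]; exact h
  have hb : (0:ℝ) ≤ Real.sqrt (specNorm B⁻¹) * ‖x‖ := by positivity
  nlinarith [norm_nonneg (Matrix.toEuclideanLin Y2 x)]

private lemma Y2T_bound {N : ℕ} (B : Matrix (Fin N) (Fin N) ℝ) (hB : B.PosDef)
    (Y2 : Matrix (Fin N) (Fin (N-1)) ℝ) (hY2 : Y2ᵀ * B * Y2 = 1)
    (r : EuclideanSpace ℝ (Fin N)) :
    ‖Matrix.toEuclideanLin Y2ᵀ r‖ ≤ Real.sqrt (specNorm B⁻¹) * ‖r‖ := by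
  set w := Matrix.toEuclideanLin Y2ᵀ r with hw
  have h1 : ‖w‖^2 ≤ Real.sqrt (specNorm B⁻¹) * ‖r‖ * ‖w‖ := by
    calc ‖w‖^2 = ⟪Matrix.toEuclideanLin Y2ᵀ r, w⟫ := by rw [← hw, real_inner_self_eq_norm_sq]
      _ = ⟪r, Matrix.toEuclideanLin Y2 w⟫ := inner_L_transpose _ _ _
      _ ≤ ‖r‖ * ‖Matrix.toEuclideanLin Y2 w‖ := real_inner_le_norm _ _
      _ ≤ ‖r‖ * (Real.sqrt (specNorm B⁻¹) * ‖w‖) :=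
          mul_le_mul_of_nonneg_left (Y2_bound B hB Y2 hY2 w) (norm_nonneg _)
      _ = Real.sqrt (specNorm B⁻¹) * ‖r‖ * ‖w‖ := by ring
  rcases eq_or_lt_of_le (norm_nonneg w) with h0 | h0
  · rw [← h0]; positivity
  · exact (mul_le_mul_iff_of_pos_right h0).1
      (by nlinarith : ‖w‖ * ‖w‖ ≤ (Real.sqrt (specNorm B⁻¹) * ‖r‖) * ‖w‖)

end Aux

section Main
open scoped RealInnerProductSpace

/-- bound on the angle between a perturbed eigenvector `ŷ = y + Y₂ h`
and the exact eigenvector `y` of a symmetric definite pair. -/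
theorem stmt_10 {N : ℕ}
    (Ahat Bhat Ehat Fhat : Matrix (Fin N) (Fin N) ℝ)
    (hBpd : Bhat.PosDef) (hAsym : Ahat.IsSymm)
    (y : EuclideanSpace ℝ (Fin N)) (hy : y ≠ 0)
    (Y2 : Matrix (Fin N) (Fin (N - 1)) ℝ)
    (μs : Fin (N - 1) → ℝ)
    (hY2By : Matrix.toEuclideanLin Y2ᵀ (Matrix.toEuclideanLin Bhat y) = 0)
    (hY2Ay : Matrix.toEuclideanLin Y2ᵀ (Matrix.toEuclideanLin Ahat y) = 0)
    (hY2BY2 : Y2ᵀ * Bhat * Y2 = 1)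
    (hY2AY2 : Y2ᵀ * Ahat * Y2 = Matrix.diagonal μs)
    (σh : ℝ) (h : EuclideanSpace ℝ (Fin (N - 1)))
    (yh : EuclideanSpace ℝ (Fin N))
    (hyh : yh = y + Matrix.toEuclideanLin Y2 h)
    (hyh0 : yh ≠ 0)
    (heig : Matrix.toEuclideanLin (Ahat + Ehat) yh
        = σh • Matrix.toEuclideanLin (Bhat + Fhat) yh)
    (m₀ : ℝ) (hm₀ : m₀ = ⨅ i, |μs i - σh|) (hm₀pos : 0 < m₀) :
    sinAngle yh y ≤ specNorm Bhat⁻¹ / m₀ * specNorm (σh • Fhat - Ehat) := by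
  classical
  set K := specNorm Bhat⁻¹ with hK
  have hK0 : (0:ℝ) ≤ K := norm_nonneg _
  set r : EuclideanSpace ℝ (Fin N) := Matrix.toEuclideanLin (σh • Fhat - Ehat) yh with hr
  -- residual equation
  have hexp : Matrix.toEuclideanLin Ahat yh + Matrix.toEuclideanLin Ehat yh
      = σh • Matrix.toEuclideanLin Bhat yh + σh • Matrix.toEuclideanLin Fhat yh := by
    have h1 := heig
    rw [map_add, LinearMap.add_apply, map_add, LinearMap.add_apply, smul_add] at h1
    exact h1
  have hrEq : Matrix.toEuclideanLin Ahat yh - σh • Matrix.toEuclideanLin Bhat yh = r := by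
    rw [hr, map_sub, LinearMap.sub_apply, _root_.map_smul, LinearMap.smul_apply]
    linear_combination (norm := module) hexp
  set w : EuclideanSpace ℝ (Fin (N-1)) := Matrix.toEuclideanLin Y2ᵀ r with hw
  -- (Σ₂ - σh) h = w
  have hAyh : Matrix.toEuclideanLin Y2ᵀ (Matrix.toEuclideanLin Ahat yh)
      = Matrix.toEuclideanLin (Matrix.diagonal μs) h := by
    rw [hyh, map_add, map_add, hY2Ay, zero_add, L_comp, L_comp, hY2AY2]
  have hByh : Matrix.toEuclideanLin Y2ᵀ (Matrix.toEuclideanLin Bhat yh) = h := by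
    rw [hyh, map_add, map_add, hY2By, zero_add, L_comp, L_comp, hY2BY2, L_one]
  have hSig : Matrix.toEuclideanLin (Matrix.diagonal μs) h - σh • h = w := by
    rw [← hAyh, ← hByh, hw, ← hrEq, map_sub, _root_.map_smul]
  have hcomp : ∀ i, (μs i - σh) * h i = w i := by
    intro i
    have h1 := congrArg (· i) hSig
    have h2 : Matrix.toEuclideanLin (Matrix.diagonal μs) h i = μs i * h i := by
      simp [Matrix.toEuclideanLin_apply, Matrix.mulVec_diagonal]
    have h3 : (Matrix.toEuclideanLin (Matrix.diagonal μs) h - σh • h) i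
        = Matrix.toEuclideanLin (Matrix.diagonal μs) h i - σh * h i := rfl
    rw [h3, h2] at h1
    linarith [h1]
  -- m₀ ‖h‖ ≤ ‖w‖
  have hm0le : ∀ i, m₀ ≤ |μs i - σh| := by
    intro i
    rw [hm₀]
    exact ciInf_le ⟨0, by rintro x ⟨j, rfl⟩; positivity⟩ i
  have hnormsq : ∀ {κ : Type} [Fintype κ] (x : EuclideanSpace ℝ κ), ‖x‖^2 = ∑ i, (x i)^2 := by
    intro κ _ x
    rw [← real_inner_self_eq_norm_sq, PiLp.inner_apply]
    simp [RCLike.inner_apply, sq]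
  have hhw : m₀ * ‖h‖ ≤ ‖w‖ := by
    have hsq : (m₀ * ‖h‖)^2 ≤ ‖w‖^2 := by
      rw [mul_pow, hnormsq h, hnormsq w, Finset.mul_sum]
      apply Finset.sum_le_sum
      intro i _
      rw [← hcomp i, mul_pow]
      have : m₀^2 ≤ (μs i - σh)^2 := by
        have := pow_le_pow_left₀ hm₀pos.le (hm0le i) 2
        rwa [sq_abs] at this
      nlinarith [sq_nonneg (h i)]
    have h1 : (0:ℝ) ≤ m₀ * ‖h‖ := by positivity
    exact (pow_le_pow_iff_left₀ h1 (norm_nonneg w) two_ne_zero).1 hsq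
  -- final chain
  have hY2h : ‖Matrix.toEuclideanLin Y2 h‖ ≤ K * specNorm (σh • Fhat - Ehat) * ‖yh‖ / m₀ := by
    have c1 : ‖Matrix.toEuclideanLin Y2 h‖ ≤ Real.sqrt K * ‖h‖ := Y2_bound Bhat hBpd Y2 hY2BY2 h
    have c2 : ‖w‖ ≤ Real.sqrt K * ‖r‖ := Y2T_bound Bhat hBpd Y2 hY2BY2 r
    have c3 : ‖r‖ ≤ specNorm (σh • Fhat - Ehat) * ‖yh‖ := by rw [hr]; exact L_norm_le _ _
    have hs : Real.sqrt K * Real.sqrt K = K := Real.mul_self_sqrt hK0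
    have hs0 : (0:ℝ) ≤ Real.sqrt K := Real.sqrt_nonneg _
    have hh : ‖h‖ ≤ ‖w‖ / m₀ := by
      rw [le_div_iff₀ hm₀pos]; linarith [hhw]
    calc ‖Matrix.toEuclideanLin Y2 h‖ ≤ Real.sqrt K * ‖h‖ := c1
      _ ≤ Real.sqrt K * (‖w‖ / m₀) := mul_le_mul_of_nonneg_left hh hs0
      _ ≤ Real.sqrt K * ((Real.sqrt K * ‖r‖) / m₀) := by
          apply mul_le_mul_of_nonneg_left _ hs0
          gcongr
      _ = Real.sqrt K * Real.sqrt K * ‖r‖ / m₀ := by ring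
      _ = K * ‖r‖ / m₀ := by rw [hs]
      _ ≤ K * (specNorm (σh • Fhat - Ehat) * ‖yh‖) / m₀ := by
          gcongr
      _ = K * specNorm (σh • Fhat - Ehat) * ‖yh‖ / m₀ := by ring
  have hbdd : BddBelow (Set.range fun μ : ℝ => ‖yh - μ • y‖ / ‖yh‖) :=
    ⟨0, by rintro x ⟨μ, rfl⟩; positivity⟩
  have hyhpos : (0:ℝ) < ‖yh‖ := norm_pos_iff.2 hyh0
  calc sinAngle yh y ≤ ‖yh - (1:ℝ) • y‖ / ‖yh‖ := ciInf_le hbdd 1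
    _ = ‖Matrix.toEuclideanLin Y2 h‖ / ‖yh‖ := by
        rw [hyh, one_smul, add_sub_cancel_left]
    _ ≤ (K * specNorm (σh • Fhat - Ehat) * ‖yh‖ / m₀) / ‖yh‖ := by
        gcongr
    _ = K / m₀ * specNorm (σh • Fhat - Ehat) := by
        field_simp

end Main
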